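/- Let φ(t) = (at+b)/(ct+d) be a Möbius transformation (ad − bc ≠ 0), t₀ ∈ ℝ with ct₀ + d ≠ 0, and set s₀ = φ(t₀), s₀′ = φ′(t₀), s₀″ = φ″(t₀). Then there exists a nonzero real constant ρ such that ρ·a = 2(s₀′)² − s₀s₀″, ρ·b = 2s₀s₀′ + t₀s₀s₀″ − 2t₀(s₀′)², ρ·c = −s₀″, and ρ·d = 2s₀′ + t₀s₀″. -/

import Mathlib

theorem moebius_coefficients_from_jet (a b c d t₀ : ℝ) (hΔ : a * d - b * c ≠ 0)
    (h : c * t₀ + d ≠ 0) (φ : ℝ → ℝ)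
    (hφ : ∀ t, φ t = (a * t + b) / (c * t + d)) :
    ∃ ρ : ℝ, ρ ≠ 0 ∧
      ρ * a = 2 * (deriv φ t₀) ^ 2 - φ t₀ * deriv (deriv φ) t₀ ∧
      ρ * b = 2 * φ t₀ * deriv φ t₀ + t₀ * φ t₀ * deriv (deriv φ) t₀
        - 2 * t₀ * (deriv φ t₀) ^ 2 ∧
      ρ * c = -(deriv (deriv φ) t₀) ∧
      ρ * d = 2 * deriv φ t₀ + t₀ * deriv (deriv φ) t₀ := by
  have hφ' : φ = fun t => (a * t + b) / (c * t + d) := funext hφ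
  subst hφ'
  -- derivative on the open set where the denominator is nonzero
  have hU : IsOpen {t : ℝ | c * t + d ≠ 0} :=
    isOpen_ne.preimage (by continuity)
  have hd : ∀ t, c * t + d ≠ 0 →
      HasDerivAt (fun t => (a * t + b) / (c * t + d))
        ((a * d - b * c) / (c * t + d) ^ 2) t := by
    intro t ht
    have h1 : HasDerivAt (fun t : ℝ => a * t + b) a t := by
      simpa using ((hasDerivAt_id t).const_mul a).add_const b
    have h2 : HasDerivAt (fun t : ℝ => c * t + d) c t := by
      simpa using ((hasDerivAt_id t).const_mul c).add_const d
    have := h1.fun_div h2 ht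
    refine this.congr_deriv ?_
    field_simp
    ring
  have hderiv1 : deriv (fun t => (a * t + b) / (c * t + d)) t₀
      = (a * d - b * c) / (c * t₀ + d) ^ 2 := (hd t₀ h).deriv
  have hev : (deriv fun t => (a * t + b) / (c * t + d))
      =ᶠ[nhds t₀] fun t => (a * d - b * c) / (c * t + d) ^ 2 := by
    filter_upwards [hU.mem_nhds h] with t ht using (hd t ht).deriv
  have hg : HasDerivAt (fun t => (a * d - b * c) / (c * t + d) ^ 2)
      (-(2 * c * (a * d - b * c)) / (c * t₀ + d) ^ 3) t₀ := by
    have h2 : HasDerivAt (fun t : ℝ => c * t + d) c t₀ := by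
      simpa using ((hasDerivAt_id t₀).const_mul c).add_const d
    have hden : HasDerivAt (fun t : ℝ => (c * t + d) ^ 2)
        (2 * (c * t₀ + d) * c) t₀ := by
      simpa [mul_comm] using h2.fun_pow 2
    have := (hasDerivAt_const t₀ (a * d - b * c)).fun_div hden (pow_ne_zero 2 h)
    refine this.congr_deriv ?_
    field_simp
    ring
  have hderiv2 : deriv (deriv fun t => (a * t + b) / (c * t + d)) t₀
      = -(2 * c * (a * d - b * c)) / (c * t₀ + d) ^ 3 := by
    rw [hev.deriv_eq]
    exact hg.deriv
  refine ⟨2 * (a * d - b * c) / (c * t₀ + d) ^ 3,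
      div_ne_zero (by simpa using hΔ) (pow_ne_zero 3 h), ?_, ?_, ?_, ?_⟩ <;>
    simp only [hderiv1, hderiv2] <;> (field_simp <;> ring)
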